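/- The hypercube graph Q_4 has distinguishing number 2. -/

import Mathlib

open SimpleGraph

/-- A colouring `c` of the vertices of `G` is distinguishing if the only
colour-preserving automorphism of `G` is the identity. -/
def IsDistinguishing {V : Type*} (G : SimpleGraph V) {k : ℕ} (c : V → Fin k) : Prop :=
  ∀ γ : G ≃g G, (∀ v, c (γ v) = c v) → ∀ v, γ v = v

/-- The distinguishing number of a finite graph `G`. -/
noncomputable def distinguishingNumber {V : Type*} [Fintype V] (G : SimpleGraph V) : ℕ :=
  sInf {k | ∃ c : V → Fin k, IsDistinguishing G c}

/-- The 4-dimensional hypercube graph: vertices are elements of `{0,1}^4`, and two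
vertices are adjacent iff they differ in exactly one coordinate. -/
def hypercubeQ4 : SimpleGraph (Fin 4 → Fin 2) where
  Adj x y := (Finset.univ.filter fun i => x i ≠ y i).card = 1
  symm := by
    constructor
    intro x y h
    have : (Finset.univ.filter fun i => y i ≠ x i) =
        (Finset.univ.filter fun i => x i ≠ y i) := by
      apply Finset.filter_congr
      intro i _
      simp [ne_comm]
    rw [this]
    exact h
  loopless := by constructor; intro x h; simp at h

namespace Q4Aux

abbrev V := Fin 4 → Fin 2

def R1 (x y : V) : Prop := (Finset.univ.filter fun i => x i ≠ y i).card = 1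

instance : ∀ x y : V, Decidable (R1 x y) := fun _ _ => by unfold R1; infer_instance

lemma adj_iff {x y : V} : hypercubeQ4.Adj x y ↔ R1 x y := Iff.rfl

def R2 (x y : V) : Prop := ∃ z, R1 x z ∧ R1 z y

instance : ∀ x y : V, Decidable (R2 x y) := fun _ _ => by unfold R2; infer_instance

-- vertices
def a0 : V := ![0,0,0,0]
def a1 : V := ![1,0,0,0]
def a2 : V := ![1,1,0,0]
def a3 : V := ![1,1,1,0]
def a4 : V := ![1,1,1,1]
def a5 : V := ![0,1,1,0]
def e2 : V := ![0,1,0,0]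
def e3 : V := ![0,0,1,0]
def e4 : V := ![0,0,0,1]

def col : V → Fin 2 := fun x =>
  if x = a0 ∨ x = a1 ∨ x = a2 ∨ x = a3 ∨ x = a4 ∨ x = a5 then 0 else 1

def inS (x : V) : Prop := col x = 0

instance : ∀ x : V, Decidable (inS x) := fun _ => by unfold inS; infer_instance

variable (γ : hypercubeQ4 ≃g hypercubeQ4)

lemma map_R1 (x y : V) : R1 (γ x) (γ y) ↔ R1 x y := γ.map_adj_iff

lemma map_R2 (x y : V) : R2 (γ x) (γ y) ↔ R2 x y := by
  constructor
  · rintro ⟨z, h1, h2⟩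
    refine ⟨γ.symm z, ?_, ?_⟩
    · rw [← map_R1 γ]; simpa using h1
    · rw [← map_R1 γ]; simpa using h2
  · rintro ⟨z, h1, h2⟩
    exact ⟨γ z, (map_R1 γ x z).2 h1, (map_R1 γ z y).2 h2⟩

-- uniqueness facts, verified by decision procedure
lemma U3 : ∀ x : V, inS x →
    (∃ b c d : V, b ≠ c ∧ b ≠ d ∧ c ≠ d ∧ inS b ∧ inS c ∧ inS d ∧
      R1 x b ∧ R1 x c ∧ R1 x d) → x = a3 := by decide

lemma U0 : ∀ x : V, inS x → ¬R1 x a3 → ¬R2 x a3 → x = a0 := by decide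

lemma U1 : ∀ x : V, inS x → R1 x a0 → x = a1 := by decide

lemma U2 : ∀ x : V, inS x → R1 x a1 → x ≠ a0 → x = a2 := by decide

lemma U4 : ∀ x : V, inS x → R1 x a3 → ¬R2 x a0 → x = a4 := by decide

lemma U5 : ∀ x : V, inS x → R1 x a3 → x ≠ a2 → x ≠ a4 → x = a5 := by decide

lemma Ue2 : ∀ x : V, R1 x a0 → R1 x a2 → x ≠ a1 → x = e2 := by decide

lemma Ue3 : ∀ x : V, R1 x a0 → R1 x a5 → x ≠ e2 → x = e3 := by decide

set_option synthInstance.maxHeartbeats 1000000 in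
set_option synthInstance.maxSize 2000 in
lemma Ue4 : ∀ x : V, R1 x a0 → x ≠ a1 → x ≠ e2 → x ≠ e3 → x = e4 := by decide

set_option synthInstance.maxHeartbeats 1000000 in
set_option synthInstance.maxSize 2000 in
set_option maxHeartbeats 2000000 in
lemma Ufin : ∀ x y : V,
    ((x = a0) ↔ (y = a0)) → (R1 x a0 ↔ R1 y a0) → (R2 x a0 ↔ R2 y a0) →
    ((x = a1) ↔ (y = a1)) → (R1 x a1 ↔ R1 y a1) → (R2 x a1 ↔ R2 y a1) →
    ((x = e2) ↔ (y = e2)) → (R1 x e2 ↔ R1 y e2) → (R2 x e2 ↔ R2 y e2) →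
    ((x = e3) ↔ (y = e3)) → (R1 x e3 ↔ R1 y e3) → (R2 x e3 ↔ R2 y e3) →
    ((x = e4) ↔ (y = e4)) → (R1 x e4 ↔ R1 y e4) → (R2 x e4 ↔ R2 y e4) →
    x = y := by decide

lemma col_distinguishing : IsDistinguishing hypercubeQ4 col := by
  intro γ hc
  have hS : ∀ x : V, inS x → inS (γ x) := by
    intro x hx
    unfold inS at *
    rw [hc x]; exact hx
  have hinj : Function.Injective γ := γ.injective
  -- eq-transfer helper
  have heq : ∀ s v : V, γ s = s → ((γ v = s) ↔ (v = s)) := by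
    intro s v hs
    constructor
    · intro h; exact hinj (h.trans hs.symm)
    · intro h; rw [h, hs]
  have hne : ∀ s v : V, γ s = s → v ≠ s → γ v ≠ s :=
    fun s v hs hv h => hv (hinj (h.trans hs.symm))
  have mR1 : ∀ s v : V, γ s = s → (R1 (γ v) s ↔ R1 v s) := by
    intro s v hs
    conv_lhs => rw [← hs]
    exact map_R1 γ v s
  have mR2 : ∀ s v : V, γ s = s → (R2 (γ v) s ↔ R2 v s) := by
    intro s v hs
    conv_lhs => rw [← hs]
    exact map_R2 γ v s
  have h3 : γ a3 = a3 := by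
    apply U3 _ (hS _ (by decide))
    exact ⟨γ a2, γ a4, γ a5,
      fun h => absurd (hinj h) (by decide),
      fun h => absurd (hinj h) (by decide),
      fun h => absurd (hinj h) (by decide),
      hS _ (by decide), hS _ (by decide), hS _ (by decide),
      (map_R1 γ a3 a2).2 (by decide), (map_R1 γ a3 a4).2 (by decide),
      (map_R1 γ a3 a5).2 (by decide)⟩
  have h0 : γ a0 = a0 := by
    apply U0 _ (hS _ (by decide))
    · rw [mR1 _ _ h3]; decide
    · rw [mR2 _ _ h3]; decide
  have h1 : γ a1 = a1 := by
    apply U1 _ (hS _ (by decide))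
    rw [← h0, map_R1]; decide
  have h2 : γ a2 = a2 := by
    apply U2 _ (hS _ (by decide))
    · rw [mR1 _ _ h1]; decide
    · exact hne _ _ h0 (by decide)
  have h4 : γ a4 = a4 := by
    apply U4 _ (hS _ (by decide))
    · rw [mR1 _ _ h3]; decide
    · rw [mR2 _ _ h0]; decide
  have h5 : γ a5 = a5 := by
    apply U5 _ (hS _ (by decide))
    · rw [mR1 _ _ h3]; decide
    · exact hne _ _ h2 (by decide)
    · exact hne _ _ h4 (by decide)
  have he2 : γ e2 = e2 := by
    apply Ue2
    · rw [mR1 _ _ h0]; decide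
    · rw [mR1 _ _ h2]; decide
    · exact hne _ _ h1 (by decide)
  have he3 : γ e3 = e3 := by
    apply Ue3
    · rw [mR1 _ _ h0]; decide
    · rw [mR1 _ _ h5]; decide
    · exact hne _ _ he2 (by decide)
  have he4 : γ e4 = e4 := by
    apply Ue4
    · rw [mR1 _ _ h0]; decide
    · exact hne _ _ h1 (by decide)
    · exact hne _ _ he2 (by decide)
    · exact hne _ _ he3 (by decide)
  intro v
  apply Ufin (γ v) v
    (heq _ _ h0) (mR1 _ _ h0) (mR2 _ _ h0)
    (heq _ _ h1) (mR1 _ _ h1) (mR2 _ _ h1)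
    (heq _ _ he2) (mR1 _ _ he2) (mR2 _ _ he2)
    (heq _ _ he3) (mR1 _ _ he3) (mR2 _ _ he3)
    (heq _ _ he4) (mR1 _ _ he4) (mR2 _ _ he4)

-- nontrivial automorphism: flip coordinate 0
def flipFun : V → V := fun x i => if i = 0 then x i + 1 else x i

lemma fin2_add : ∀ a : Fin 2, a + 1 + 1 = a := by decide

lemma flip_invol : ∀ x, flipFun (flipFun x) = x := by
  intro x
  funext i
  by_cases h : i = 0 <;> simp [flipFun, h, fin2_add]

def flipEquiv : V ≃ V where
  toFun := flipFun
  invFun := flipFun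
  left_inv := flip_invol
  right_inv := flip_invol

lemma flipIso_adj : ∀ x y : V, hypercubeQ4.Adj (flipFun x) (flipFun y) ↔ hypercubeQ4.Adj x y := by
  intro x y
  have : (Finset.univ.filter fun i => flipFun x i ≠ flipFun y i) =
      (Finset.univ.filter fun i => x i ≠ y i) := by
    apply Finset.filter_congr
    intro i _
    unfold flipFun
    by_cases h : i = 0
    · simp only [h, if_pos]
      constructor
      · intro hne hxy; exact hne (by rw [hxy])
      · intro hne hxy
        exact hne (by
          have := congrArg (· + 1) hxy
          simpa using this)
    · simp [h]
  show (Finset.univ.filter fun i => flipFun x i ≠ flipFun y i).card = 1 ↔ _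
  rw [this]; rfl

def flipIso : hypercubeQ4 ≃g hypercubeQ4 :=
  ⟨flipEquiv, by intro x y; exact flipIso_adj x y⟩

lemma not_one : ¬ ∃ c : V → Fin 1, IsDistinguishing hypercubeQ4 c := by
  rintro ⟨c, hc⟩
  have := hc flipIso (fun v => Subsingleton.elim _ _) a0
  have h0 : flipIso a0 0 = a0 0 := by rw [this]
  revert h0
  show flipFun a0 0 = a0 0 → False
  decide

lemma not_zero : ¬ ∃ c : V → Fin 0, IsDistinguishing hypercubeQ4 c := by
  rintro ⟨c, _⟩
  exact (c a0).elim0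

end Q4Aux

theorem distinguishingNumber_hypercubeQ4 :
    distinguishingNumber hypercubeQ4 = 2 := by
  have h2 : 2 ∈ {k | ∃ c : (Fin 4 → Fin 2) → Fin k, IsDistinguishing hypercubeQ4 c} :=
    ⟨Q4Aux.col, Q4Aux.col_distinguishing⟩
  unfold distinguishingNumber
  refine le_antisymm (Nat.sInf_le h2) ?_
  by_contra h
  push_neg at h
  have hmem := Nat.sInf_mem ⟨2, h2⟩
  interval_cases hv : sInf {k | ∃ c : (Fin 4 → Fin 2) → Fin k, IsDistinguishing hypercubeQ4 c}
  · exact Q4Aux.not_zero hmem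
  · exact Q4Aux.not_one hmem
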